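/- Let Y1 and Y2 be non-negative random variables (not necessarily independent) such that Y1 first-order stochastically dominates b1·Z1 where Z1 ~ χ²_d, and Y2 is first-order stochastically dominated by b2·Z2 where Z2 ~ χ²_d, with constants b1 > b2 > 0. Then for any m ∈ ℝ, Pr(Y1 − Y2 ≤ m) ≤ exp(m·(b1−b2)/(8·b1·b2)) · ((b1+b2)²/(4·b1·b2))^(−d/4). -/

import Mathlib

open MeasureTheory ProbabilityTheory

/-- The chi-squared distribution with `d` degrees of freedom, as the
Gamma distribution with shape `d/2` and rate `1/2`. -/
noncomputable def chiSqMeasure (d : ℕ) : Measure ℝ :=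
  gammaMeasure ((d : ℝ) / 2) (1 / 2)

open Real Set in
/-- MGF of the gamma distribution. -/
lemma gamma_mgf_aux (a r c : ℝ) (ha : 0 < a) (hr : 0 < r) (hc : c < r) :
    ∫⁻ z, ENNReal.ofReal (Real.exp (c * z)) ∂(gammaMeasure a r)
      = ENNReal.ofReal ((r / (r - c)) ^ a) := by
  have hrc : (0:ℝ) < r - c := by linarith
  have hΓ : 0 < Real.Gamma a := Real.Gamma_pos_of_pos ha
  have hmeas : Measurable (gammaPDF a r) := (measurable_gammaPDFReal a r).ennreal_ofReal
  rw [gammaMeasure, lintegral_withDensity_eq_lintegral_mul _ hmeas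
    (by fun_prop)]
  have key : ∀ z : ℝ, gammaPDF a r z * ENNReal.ofReal (Real.exp (c * z))
      = ENNReal.ofReal ((r / (r - c)) ^ a) * gammaPDF a (r - c) z := by
    intro z
    rcases lt_or_ge z 0 with hz | hz
    · rw [gammaPDF_of_neg hz, gammaPDF_of_neg hz, zero_mul, mul_zero]
    · rw [gammaPDF_of_nonneg hz, gammaPDF_of_nonneg hz,
        ← ENNReal.ofReal_mul (by positivity), ← ENNReal.ofReal_mul (by positivity)]
      congr 1
      rw [Real.div_rpow hr.le hrc.le, mul_assoc, mul_assoc, mul_assoc, ← Real.exp_add]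
      have : -(r * z) + c * z = -((r - c) * z) := by ring
      rw [this]
      have h1 : (0:ℝ) < (r - c) ^ a := Real.rpow_pos_of_pos hrc a
      field_simp
  calc ∫⁻ z, gammaPDF a r z * ENNReal.ofReal (Real.exp (c * z))
      = ∫⁻ z, ENNReal.ofReal ((r / (r - c)) ^ a) * gammaPDF a (r - c) z :=
        lintegral_congr key
    _ = ENNReal.ofReal ((r / (r - c)) ^ a) * ∫⁻ z, gammaPDF a (r - c) z :=
        lintegral_const_mul _ ((measurable_gammaPDFReal a (r - c)).ennreal_ofReal)
    _ = ENNReal.ofReal ((r / (r - c)) ^ a) := by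
        rw [lintegral_gammaPDF_eq_one ha hrc, mul_one]

open Real Set in
/-- FSD transfer for increasing exponential. -/
lemma transfer_le_aux {Ω : Type*} [MeasurableSpace Ω] (μ : Measure Ω) (ν : Measure ℝ)
    (Y : Ω → ℝ) (hYm : Measurable Y) (b c : ℝ) (hc : 0 < c)
    (h : ∀ x : ℝ, μ {ω | x ≤ Y ω} ≤ ν {z | x ≤ b * z}) :
    ∫⁻ ω, ENNReal.ofReal (Real.exp (c * Y ω)) ∂μ
      ≤ ∫⁻ z, ENNReal.ofReal (Real.exp (c * (b * z))) ∂ν := by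
  rw [lintegral_eq_lintegral_meas_le μ (ae_of_all _ fun ω => (Real.exp_pos _).le)
      (by fun_prop),
    lintegral_eq_lintegral_meas_le ν (ae_of_all _ fun z => (Real.exp_pos _).le)
      (by fun_prop)]
  refine lintegral_mono_ae ((ae_restrict_iff' measurableSet_Ioi).mpr
    (ae_of_all _ fun s hs => ?_))
  have h1 : {ω | s ≤ Real.exp (c * Y ω)} = {ω | Real.log s / c ≤ Y ω} := by
    ext ω
    simp only [mem_setOf_eq]
    rw [div_le_iff₀' hc, ← Real.log_le_iff_le_exp hs]
  have h2 : {z : ℝ | s ≤ Real.exp (c * (b * z))} = {z : ℝ | Real.log s / c ≤ b * z} := by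
    ext z
    simp only [mem_setOf_eq]
    rw [div_le_iff₀' hc, ← Real.log_le_iff_le_exp hs]
  rw [h1, h2]
  exact h _

open Real Set in
/-- FSD transfer for decreasing exponential. -/
lemma transfer_ge_aux {Ω : Type*} [MeasurableSpace Ω] (μ : Measure Ω) [IsProbabilityMeasure μ]
    (ν : Measure ℝ) [IsProbabilityMeasure ν]
    (Y : Ω → ℝ) (hYm : Measurable Y) (b c : ℝ) (hc : 0 < c)
    (h : ∀ x : ℝ, ν {z | x ≤ b * z} ≤ μ {ω | x ≤ Y ω}) :
    ∫⁻ ω, ENNReal.ofReal (Real.exp (-(c * Y ω))) ∂μ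
      ≤ ∫⁻ z, ENNReal.ofReal (Real.exp (-(c * (b * z)))) ∂ν := by
  rw [lintegral_eq_lintegral_meas_lt μ (ae_of_all _ fun ω => (Real.exp_pos _).le)
      (by fun_prop),
    lintegral_eq_lintegral_meas_lt ν (ae_of_all _ fun z => (Real.exp_pos _).le)
      (by fun_prop)]
  refine lintegral_mono_ae ((ae_restrict_iff' measurableSet_Ioi).mpr
    (ae_of_all _ fun s hs => ?_))
  have key : ∀ u : ℝ, (s < Real.exp (-(c * u)) ↔ u < -Real.log s / c) := by
    intro u
    rw [lt_div_iff₀ hc, ← Real.log_lt_iff_lt_exp hs, mul_comm]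
    exact ⟨fun h => by linarith, fun h => by linarith⟩
  have h1 : {ω | s < Real.exp (-(c * Y ω))} = {ω | -Real.log s / c ≤ Y ω}ᶜ := by
    ext ω
    simp only [mem_setOf_eq, mem_compl_iff, not_le, key]
  have h2 : {z : ℝ | s < Real.exp (-(c * (b * z)))} = {z : ℝ | -Real.log s / c ≤ b * z}ᶜ := by
    ext z
    simp only [mem_setOf_eq, mem_compl_iff, not_le, key]
  rw [h1, h2,
    prob_compl_eq_one_sub (measurableSet_le measurable_const hYm),
    prob_compl_eq_one_sub (measurableSet_le measurable_const (by fun_prop : Measurable fun z : ℝ => b * z))]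
  exact tsub_le_tsub_left (h _) 1

theorem stmt_0 {Ω : Type*} [MeasurableSpace Ω] (μ : Measure Ω) [IsProbabilityMeasure μ]
    (d : ℕ) (b1 b2 m : ℝ) (hb12 : b1 > b2) (hb2 : b2 > 0)
    (Y1 Y2 : Ω → ℝ) (hY1m : Measurable Y1) (hY2m : Measurable Y2)
    (hY1nn : ∀ ω, 0 ≤ Y1 ω) (hY2nn : ∀ ω, 0 ≤ Y2 ω)
    -- Y1 ⪰_FSD b1 · Z1 with Z1 ~ χ²_d
    (hFSD1 : ∀ x : ℝ, chiSqMeasure d {z | x ≤ b1 * z} ≤ μ {ω | x ≤ Y1 ω})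
    -- Y2 ⪯_FSD b2 · Z2 with Z2 ~ χ²_d
    (hFSD2 : ∀ x : ℝ, μ {ω | x ≤ Y2 ω} ≤ chiSqMeasure d {z | x ≤ b2 * z}) :
    (μ {ω | Y1 ω - Y2 ω ≤ m}).toReal ≤
      Real.exp (m * (b1 - b2) / (8 * b1 * b2)) *
        ((b1 + b2) ^ 2 / (4 * b1 * b2)) ^ (-(d : ℝ) / 4) := by
  rcases Nat.eq_zero_or_pos d with hd0 | hdpos
  · exfalso
    have h0 := hFSD2 0
    have huniv : {ω | (0:ℝ) ≤ Y2 ω} = Set.univ := Set.eq_univ_of_forall hY2nn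
    have hzero : chiSqMeasure d = 0 := by
      subst hd0
      have hpdf : gammaPDF (((0:ℕ):ℝ)/2) (1/2) = fun _ => 0 := by
        funext x
        rw [gammaPDF_eq]
        norm_num [Real.Gamma_zero]
      show gammaMeasure (((0:ℕ):ℝ)/2) (1/2) = 0
      rw [gammaMeasure, hpdf]
      simp
    rw [huniv, hzero, measure_univ] at h0
    simp at h0
  have hb1 : 0 < b1 := hb2.trans hb12
  have hb1' : b1 ≠ 0 := ne_of_gt hb1
  have hb2' : b2 ≠ 0 := ne_of_gt hb2
  have hbb : (0:ℝ) < b1 + b2 := by linarith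
  have hdR : (0:ℝ) < d := by exact_mod_cast hdpos
  have ha : 0 < (d:ℝ)/2 := by positivity
  haveI : IsProbabilityMeasure (chiSqMeasure d) :=
    isProbabilityMeasure_gammaMeasure ha one_half_pos
  set t : ℝ := (b1 - b2) / (8 * b1 * b2) with ht
  have htpos : 0 < t := div_pos (by linarith) (by positivity)
  have h2tb1 : 0 < 2 * t * b1 := by positivity
  have hc1 : -(2 * t * b1) < 1/2 := by linarith
  have h2tb2eq : 2 * t * b2 = (b1 - b2) / (4 * b1) := by
    rw [ht]; field_simp; ring
  have h2tb2 : 2 * t * b2 < 1/2 := by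
    rw [h2tb2eq, div_lt_iff₀ (by positivity)]; linarith
  have hx1 : (0:ℝ) < 1/2 - -(2 * t * b1) := by linarith
  have hx2 : (0:ℝ) < 1/2 - 2 * t * b2 := by linarith
  set q1 : ℝ := 1/2 / (1/2 - -(2 * t * b1)) with hq1def
  set q2 : ℝ := 1/2 / (1/2 - 2 * t * b2) with hq2def
  have hq1 : 0 < q1 := div_pos one_half_pos hx1
  have hq2 : 0 < q2 := div_pos one_half_pos hx2
  set A1 : ℝ := q1 ^ ((d:ℝ)/2) with hA1def
  set A2 : ℝ := q2 ^ ((d:ℝ)/2) with hA2def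
  have hA1pos : 0 < A1 := Real.rpow_pos_of_pos hq1 _
  have hA2pos : 0 < A2 := Real.rpow_pos_of_pos hq2 _
  -- transfer and MGF bounds
  have hA1 : ∫⁻ ω, ENNReal.ofReal (Real.exp (-(2 * t * Y1 ω))) ∂μ
      ≤ ENNReal.ofReal A1 := by
    refine le_trans
      (transfer_ge_aux μ (chiSqMeasure d) Y1 hY1m b1 (2*t) (by positivity) hFSD1) ?_
    have hrw : ∀ z : ℝ, -(2*t*(b1*z)) = -(2*t*b1) * z := fun z => by ring
    simp_rw [hrw]
    have hch : chiSqMeasure d = gammaMeasure ((d:ℝ)/2) (1/2) := rfl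
    rw [hch, gamma_mgf_aux _ _ _ ha one_half_pos hc1]
  have hA2 : ∫⁻ ω, ENNReal.ofReal (Real.exp (2 * t * Y2 ω)) ∂μ
      ≤ ENNReal.ofReal A2 := by
    refine le_trans
      (transfer_le_aux μ (chiSqMeasure d) Y2 hY2m b2 (2*t) (by positivity) hFSD2) ?_
    have hrw : ∀ z : ℝ, 2*t*(b2*z) = (2*t*b2) * z := fun z => by ring
    simp_rw [hrw]
    have hch : chiSqMeasure d = gammaMeasure ((d:ℝ)/2) (1/2) := rfl
    rw [hch, gamma_mgf_aux _ _ _ ha one_half_pos h2tb2]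
  -- Markov
  set S := {ω | Y1 ω - Y2 ω ≤ m} with hS
  set ε : ENNReal := ENNReal.ofReal (Real.exp (-(t * m))) with hε
  have hf : AEMeasurable (fun ω => ENNReal.ofReal (Real.exp (t * (Y2 ω - Y1 ω)))) μ := by
    fun_prop
  have markov : ε * μ S ≤ ∫⁻ ω, ENNReal.ofReal (Real.exp (t * (Y2 ω - Y1 ω))) ∂μ := by
    refine le_trans ?_ (mul_meas_ge_le_lintegral₀ hf ε)
    refine mul_le_mul_right (measure_mono fun ω hω => ?_) ε
    have hω' : Y1 ω - Y2 ω ≤ m := hω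
    simp only [Set.mem_setOf_eq]
    exact ENNReal.ofReal_le_ofReal (Real.exp_le_exp.mpr (by nlinarith [htpos, hω']))
  -- Cauchy-Schwarz
  have hpq : Real.HolderConjugate 2 2 := Real.HolderConjugate.two_two
  have hf1 : AEMeasurable (fun ω => ENNReal.ofReal (Real.exp (-(t * Y1 ω)))) μ := by fun_prop
  have hf2 : AEMeasurable (fun ω => ENNReal.ofReal (Real.exp (t * Y2 ω))) μ := by fun_prop
  have CS := ENNReal.lintegral_mul_le_Lp_mul_Lq μ hpq hf1 hf2
  have hsq1 : ∀ ω, ENNReal.ofReal (Real.exp (-(t * Y1 ω))) ^ (2:ℝ)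
      = ENNReal.ofReal (Real.exp (-(2 * t * Y1 ω))) := by
    intro ω
    rw [ENNReal.ofReal_rpow_of_pos (Real.exp_pos _), ← Real.exp_mul]
    congr 1; ring
  have hsq2 : ∀ ω, ENNReal.ofReal (Real.exp (t * Y2 ω)) ^ (2:ℝ)
      = ENNReal.ofReal (Real.exp (2 * t * Y2 ω)) := by
    intro ω
    rw [ENNReal.ofReal_rpow_of_pos (Real.exp_pos _), ← Real.exp_mul]
    congr 1; ring
  have E1 : (∫⁻ ω, ENNReal.ofReal (Real.exp (-(t * Y1 ω))) ^ (2:ℝ) ∂μ) ^ ((1:ℝ)/2)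
      ≤ ENNReal.ofReal A1 ^ ((1:ℝ)/2) := by
    refine ENNReal.rpow_le_rpow ?_ (by norm_num)
    calc ∫⁻ ω, ENNReal.ofReal (Real.exp (-(t * Y1 ω))) ^ (2:ℝ) ∂μ
        = ∫⁻ ω, ENNReal.ofReal (Real.exp (-(2 * t * Y1 ω))) ∂μ := lintegral_congr hsq1
      _ ≤ ENNReal.ofReal A1 := hA1
  have E2 : (∫⁻ ω, ENNReal.ofReal (Real.exp (t * Y2 ω)) ^ (2:ℝ) ∂μ) ^ ((1:ℝ)/2)
      ≤ ENNReal.ofReal A2 ^ ((1:ℝ)/2) := by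
    refine ENNReal.rpow_le_rpow ?_ (by norm_num)
    calc ∫⁻ ω, ENNReal.ofReal (Real.exp (t * Y2 ω)) ^ (2:ℝ) ∂μ
        = ∫⁻ ω, ENNReal.ofReal (Real.exp (2 * t * Y2 ω)) ∂μ := lintegral_congr hsq2
      _ ≤ ENNReal.ofReal A2 := hA2
  set R : ℝ := A1 ^ ((1:ℝ)/2) * A2 ^ ((1:ℝ)/2) with hRdef
  have hRpos : 0 < R :=
    mul_pos (Real.rpow_pos_of_pos hA1pos _) (Real.rpow_pos_of_pos hA2pos _)
  have key : ε * μ S ≤ ENNReal.ofReal R := by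
    calc ε * μ S
        ≤ ∫⁻ ω, ENNReal.ofReal (Real.exp (t * (Y2 ω - Y1 ω))) ∂μ := markov
      _ = ∫⁻ ω, ((fun ω => ENNReal.ofReal (Real.exp (-(t * Y1 ω)))) *
            (fun ω => ENNReal.ofReal (Real.exp (t * Y2 ω)))) ω ∂μ := by
          refine lintegral_congr fun ω => ?_
          simp only [Pi.mul_apply]
          rw [← ENNReal.ofReal_mul (Real.exp_pos _).le, ← Real.exp_add]
          congr 2; ring
      _ ≤ (∫⁻ ω, ENNReal.ofReal (Real.exp (-(t * Y1 ω))) ^ (2:ℝ) ∂μ) ^ ((1:ℝ)/2) *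
            (∫⁻ ω, ENNReal.ofReal (Real.exp (t * Y2 ω)) ^ (2:ℝ) ∂μ) ^ ((1:ℝ)/2) := CS
      _ ≤ ENNReal.ofReal A1 ^ ((1:ℝ)/2) * ENNReal.ofReal A2 ^ ((1:ℝ)/2) := mul_le_mul' E1 E2
      _ = ENNReal.ofReal R := by
          rw [ENNReal.ofReal_rpow_of_pos hA1pos, ENNReal.ofReal_rpow_of_pos hA2pos,
            ← ENNReal.ofReal_mul (Real.rpow_pos_of_pos hA1pos _).le]
  have hμS : μ S ≤ ENNReal.ofReal (Real.exp (t*m) * R) := by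
    have hcancel : ε * ENNReal.ofReal (Real.exp (t*m) * R) = ENNReal.ofReal R := by
      rw [hε, ← ENNReal.ofReal_mul (Real.exp_pos _).le, ← mul_assoc, ← Real.exp_add]
      norm_num
    have hεne : ε ≠ 0 := by
      rw [hε]; exact (ENNReal.ofReal_pos.mpr (Real.exp_pos _)).ne'
    have hεtop : ε ≠ ⊤ := by rw [hε]; exact ENNReal.ofReal_ne_top
    refine (ENNReal.mul_le_mul_iff_right hεne hεtop).mp ?_
    rw [hcancel]
    exact key
  refine le_trans (ENNReal.toReal_le_of_le_ofReal
    (mul_nonneg (Real.exp_pos _).le hRpos.le) hμS) (le_of_eq ?_)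
  -- real algebra
  have e1 : q1 = 2*b2/(b1+b2) := by
    rw [hq1def, ht]
    rw [div_eq_div_iff (by linarith) hbb.ne']
    field_simp
    ring
  have e2 : q2 = 2*b1/(b1+b2) := by
    rw [hq2def, ht]
    rw [div_eq_div_iff (by linarith) hbb.ne']
    field_simp
    ring
  have hexp : t * m = m * (b1 - b2) / (8 * b1 * b2) := by rw [ht]; ring
  have hX : (0:ℝ) < (b1 + b2)^2 / (4 * b1 * b2) :=
    div_pos (by positivity) (by positivity)
  have hR : R = ((b1 + b2) ^ 2 / (4 * b1 * b2)) ^ (-(d:ℝ)/4) := by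
    rw [hRdef, hA1def, hA2def, ← Real.rpow_mul hq1.le, ← Real.rpow_mul hq2.le,
      ← Real.mul_rpow hq1.le hq2.le, e1, e2]
    have hqq : 2*b2/(b1+b2) * (2*b1/(b1+b2)) = 4*b1*b2/(b1+b2)^2 := by
      rw [div_mul_div_comm]
      congr 1 <;> ring
    rw [hqq, show ((d:ℝ)/2*(1/2)) = (d:ℝ)/4 by ring,
      show (-(d:ℝ)/4) = -((d:ℝ)/4) by ring,
      Real.rpow_neg hX.le, ← Real.inv_rpow hX.le, inv_div]
  rw [hR, hexp]
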